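/- Let n ≥ 2. The Lie algebra u_n is locally finite dimensional and locally nilpotent: for every finite subset S of u_n, the Lie subalgebra of u_n generated by S is a finite-dimensional and nilpotent Lie algebra. -/

import Mathlib

open MvPolynomial

noncomputable section


/-- If a derivation of `MvPolynomial σ K` maps every generator `X j`, `j ∈ s`, into the
subalgebra `supported K s` of polynomials supported on `s`, then it maps the whole of
`supported K s` into itself. -/
theorem Derivation.mem_supported_of_forall_mem
    {K : Type*} [CommRing K] {σ : Type*} (s : Set σ)
    (D : Derivation K (MvPolynomial σ K) (MvPolynomial σ K))
    (h : ∀ j ∈ s, D (X j) ∈ supported K s)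
    {p : MvPolynomial σ K} (hp : p ∈ supported K s) : D p ∈ supported K s := by
  rw [supported_eq_adjoin_X] at hp
  induction hp using Algebra.adjoin_induction with
  | mem x hx =>
    obtain ⟨j, hj, rfl⟩ := hx
    exact h j hj
  | algebraMap r =>
    rw [Derivation.map_algebraMap]
    exact zero_mem _
  | add x y hx hy ihx ihy =>
    rw [map_add]
    exact add_mem ihx ihy
  | mul x y hx hy ihx ihy =>
    rw [Derivation.leibniz, smul_eq_mul, smul_eq_mul]
    rw [← supported_eq_adjoin_X] at hx hy
    exact add_mem (mul_mem hx ihy) (mul_mem hy ihx)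

/-- If a derivation of `MvPolynomial σ K` kills every generator `X j`, `j ∈ s`, then it
kills the whole subalgebra `supported K s`. -/
theorem Derivation.eq_zero_of_forall_eq_zero
    {K : Type*} [CommRing K] {σ : Type*} (s : Set σ)
    (D : Derivation K (MvPolynomial σ K) (MvPolynomial σ K))
    (h : ∀ j ∈ s, D (X j) = 0)
    {p : MvPolynomial σ K} (hp : p ∈ supported K s) : D p = 0 := by
  rw [supported_eq_adjoin_X] at hp
  induction hp using Algebra.adjoin_induction with
  | mem x hx =>
    obtain ⟨j, hj, rfl⟩ := hx
    exact h j hj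
  | algebraMap r =>
    rw [Derivation.map_algebraMap]
  | add x y hx hy ihx ihy =>
    rw [map_add, ihx, ihy, add_zero]
  | mul x y hx hy ihx ihy =>
    rw [Derivation.leibniz, ihx, ihy, smul_zero, smul_zero, add_zero]

/-- The defining condition for the Lie algebra `u_n = K∂₁ ⊕ P₁∂₂ ⊕ ⋯ ⊕ P_{n-1}∂ₙ` of
triangular polynomial derivations of `P_n = K[x₁,…,xₙ]` (variables indexed by `Fin n`,
zero-based): a derivation `D` of `P_n` is triangular iff, for every `i`, the polynomial
`D (X i)` only involves the variables `X j` with `j < i` (so the coefficient of `∂_i`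
lies in `P_{i-1}`, where `P₀ = K`). -/
def triSet (K : Type*) [Field K] (n : ℕ) :
    Set (Derivation K (MvPolynomial (Fin n) K) (MvPolynomial (Fin n) K)) :=
  {D | ∀ i : Fin n, D (X i) ∈ supported K {j : Fin n | (j : ℕ) < (i : ℕ)}}

theorem supported_upward {K : Type*} [Field K] {n : ℕ}
    (p : MvPolynomial (Fin n) K) (s t : Set (Fin n)) (hst : s ⊆ t)
    (hp : p ∈ supported K s) : p ∈ supported K t :=
  supported_mono hst hp

theorem triSet_stable {K : Type*} [Field K] {n : ℕ}
    {D : Derivation K (MvPolynomial (Fin n) K) (MvPolynomial (Fin n) K)}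
    (hD : D ∈ triSet K n) (i : Fin n) :
    ∀ j ∈ {j' : Fin n | (j' : ℕ) < (i : ℕ)},
      D (X j) ∈ supported K {j' : Fin n | (j' : ℕ) < (i : ℕ)} := by
  intro j hj
  refine supported_upward _ {j' : Fin n | (j' : ℕ) < (j : ℕ)} _ ?_ (hD j)
  intro l hl
  have hl' : (l : ℕ) < (j : ℕ) := hl
  have hj' : (j : ℕ) < (i : ℕ) := hj
  exact lt_trans hl' hj'

theorem triSet_lie {K : Type*} [Field K] {n : ℕ}
    {a b : Derivation K (MvPolynomial (Fin n) K) (MvPolynomial (Fin n) K)}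
    (ha : a ∈ triSet K n) (hb : b ∈ triSet K n) : ⁅a, b⁆ ∈ triSet K n := by
  intro i
  rw [Derivation.commutator_apply]
  exact sub_mem
    (Derivation.mem_supported_of_forall_mem _ a (triSet_stable ha i) (hb i))
    (Derivation.mem_supported_of_forall_mem _ b (triSet_stable hb i) (ha i))

/-- The Lie algebra `u_n = K∂₁ ⊕ P₁∂₂ ⊕ ⋯ ⊕ P_{n-1}∂ₙ` of triangular polynomial
derivations, as a Lie subalgebra of the Lie algebra of all `K`-derivations of the
polynomial algebra `P_n = K[x₁,…,xₙ]`. -/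
def triangular (K : Type*) [Field K] (n : ℕ) :
    LieSubalgebra K (Derivation K (MvPolynomial (Fin n) K) (MvPolynomial (Fin n) K)) where
  carrier := triSet K n
  add_mem' := fun {a b} ha hb i => by
    rw [Derivation.add_apply]; exact add_mem (ha i) (hb i)
  zero_mem' := fun i => by
    rw [Derivation.zero_apply]; exact zero_mem _
  smul_mem' := fun c a ha i => by
    rw [Derivation.smul_apply]; exact Subalgebra.smul_mem _ (ha i) c
  lie_mem' := fun {a b} ha hb => triSet_lie ha hb

theorem mem_triangular_iff {K : Type*} [Field K] {n : ℕ}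
    (D : Derivation K (MvPolynomial (Fin n) K) (MvPolynomial (Fin n) K)) :
    D ∈ triangular K n ↔
      ∀ i : Fin n, D (X i) ∈ supported K {j : Fin n | (j : ℕ) < (i : ℕ)} := Iff.rfl



namespace TriAux

variable {K : Type*} [Field K] {n : ℕ}

/-- Integer weight of a monomial exponent vector. -/
def wt (w : Fin n → ℤ) (m : Fin n →₀ ℕ) : ℤ := ∑ j, (m j : ℤ) * w j

lemma wt_add (w : Fin n → ℤ) (a b : Fin n →₀ ℕ) : wt w (a + b) = wt w a + wt w b := by
  simp [wt, Finsupp.add_apply, add_mul, Finset.sum_add_distrib]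

lemma wt_single (w : Fin n → ℤ) (j : Fin n) (k : ℕ) :
    wt w (Finsupp.single j k) = (k : ℤ) * w j := by
  simp [wt, Finsupp.single_apply]

lemma wt_nonneg {w : Fin n → ℤ} (hw : ∀ j, 1 ≤ w j) (m : Fin n →₀ ℕ) : 0 ≤ wt w m :=
  Finset.sum_nonneg fun j _ => mul_nonneg (by positivity) (le_trans zero_le_one (hw j))

/-- Polynomials all of whose monomials have weight ≤ e. -/
def Mdeg (w : Fin n → ℤ) (e : ℤ) : Submodule K (MvPolynomial (Fin n) K) where
  carrier := {p | ∀ m ∈ p.support, wt w m ≤ e}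
  zero_mem' := by simp
  add_mem' := by
    intro a b ha hb m hm
    rcases Finset.mem_union.1 (Finsupp.support_add hm) with h | h
    · exact ha m h
    · exact hb m h
  smul_mem' := by
    intro c p hp m hm
    exact hp m (Finsupp.support_smul hm)

lemma mem_Mdeg {w : Fin n → ℤ} {e : ℤ} {p : MvPolynomial (Fin n) K} :
    p ∈ (Mdeg w e : Submodule K _) ↔ ∀ m ∈ p.support, wt w m ≤ e := Iff.rfl

lemma Mdeg_mono {w : Fin n → ℤ} {e e' : ℤ} (h : e ≤ e') :
    (Mdeg w e : Submodule K (MvPolynomial (Fin n) K)) ≤ Mdeg w e' :=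
  fun _ hp m hm => le_trans (hp m hm) h

lemma eq_zero_of_mem_Mdeg {w : Fin n → ℤ} (hw : ∀ j, 1 ≤ w j) {e : ℤ} (he : e < 0)
    {p : MvPolynomial (Fin n) K} (hp : p ∈ (Mdeg w e : Submodule K _)) : p = 0 := by
  by_contra h
  obtain ⟨m, hm⟩ := Finset.nonempty_iff_ne_empty.2 (fun hs => h (MvPolynomial.support_eq_empty.1 hs))
  exact absurd (le_trans (wt_nonneg hw m) (hp m hm)) (by omega)

lemma monomial_mem_Mdeg {w : Fin n → ℤ} {e : ℤ} {s : Fin n →₀ ℕ} (h : wt w s ≤ e) (r : K) :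
    monomial s r ∈ (Mdeg w e : Submodule K _) := by
  intro m hm
  have := MvPolynomial.support_monomial_subset hm
  rw [Finset.mem_singleton] at this
  exact this ▸ h

lemma mul_mem_Mdeg {w : Fin n → ℤ} {e₁ e₂ : ℤ} {p q : MvPolynomial (Fin n) K}
    (hp : p ∈ (Mdeg w e₁ : Submodule K _)) (hq : q ∈ (Mdeg w e₂ : Submodule K _)) :
    p * q ∈ (Mdeg w (e₁ + e₂) : Submodule K _) := by
  intro m hm
  classical
  have := MvPolynomial.support_mul p q hm
  rw [Finset.mem_add] at this
  obtain ⟨a, ha, b, hb, rfl⟩ := this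
  rw [wt_add]
  exact add_le_add (hp a ha) (hq b hb)

/-- Key lemma: a derivation whose values on the variables drop weighted degree by at least
`-t` maps `Mdeg e` into `Mdeg (e + t)`. -/
lemma deriv_mem_Mdeg {w : Fin n → ℤ} (t : ℤ)
    (D : Derivation K (MvPolynomial (Fin n) K) (MvPolynomial (Fin n) K))
    (hD : ∀ j, D (X j) ∈ (Mdeg w (w j + t) : Submodule K _))
    {e : ℤ} {p : MvPolynomial (Fin n) K} (hp : p ∈ (Mdeg w e : Submodule K _)) :
    D p ∈ (Mdeg w (e + t) : Submodule K _) := by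
  have hDeq : D = mkDerivation K (fun i => D (X i)) :=
    derivation_ext fun i => (mkDerivation_X K (fun i => D (X i)) i).symm
  have hps : D p = ∑ s ∈ p.support, D (monomial s (coeff s p)) := by
    conv_lhs => rw [← support_sum_monomial_coeff p]
    rw [map_sum]
  rw [hps]
  refine Submodule.sum_mem _ fun s hs => ?_
  rw [hDeq, mkDerivation_monomial]
  refine Submodule.smul_mem _ _ ?_
  rw [Finsupp.sum]
  refine Submodule.sum_mem _ fun i hi => ?_
  have hsi : 1 ≤ s i := Nat.one_le_iff_ne_zero.2 (Finsupp.mem_support_iff.1 hi)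
  have hcancel : (s - Finsupp.single i 1) + Finsupp.single i 1 = s := by
    ext j
    rcases eq_or_ne j i with rfl | hji
    · simp only [Finsupp.add_apply, Finsupp.tsub_apply, Finsupp.single_eq_same]
      omega
    · simp [Finsupp.single_apply, (Ne.symm hji : i ≠ j)]
  have hwt : wt w (s - Finsupp.single i 1) = wt w s - w i := by
    have := wt_add w (s - Finsupp.single i 1) (Finsupp.single i 1)
    rw [hcancel, wt_single] at this
    omega
  have hws : wt w s ≤ e := hp s hs
  rw [smul_eq_mul]
  have hm : monomial (s - Finsupp.single i 1) ((s i : K)) ∈ (Mdeg w (e - w i) : Submodule K _) :=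
    monomial_mem_Mdeg (by omega) _
  have := mul_mem_Mdeg hm (hD i)
  have heq : e - w i + (w i + t) = e + t := by ring
  rwa [heq] at this

end TriAux

namespace TriAux

variable {K : Type*} [Field K] {n : ℕ}

lemma degsum_le_wt {w : Fin n → ℤ} (hw : ∀ j, 1 ≤ w j) (m : Fin n →₀ ℕ) :
    ((m.sum fun _ k => k : ℕ) : ℤ) ≤ wt w m := by
  have hsum : (m.sum fun _ k => k : ℕ) = ∑ j, m j := Finsupp.sum_fintype m _ (fun _ => rfl)
  rw [hsum]
  push_cast
  refine Finset.sum_le_sum fun j _ => ?_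
  calc ((m j : ℤ)) = (m j : ℤ) * 1 := (mul_one _).symm
    _ ≤ (m j : ℤ) * w j := by
        apply mul_le_mul_of_nonneg_left (hw j) (by positivity)

lemma Mdeg_fd {w : Fin n → ℤ} (hw : ∀ j, 1 ≤ w j) (e : ℤ) :
    FiniteDimensional K ↥(Mdeg w e : Submodule K (MvPolynomial (Fin n) K)) := by
  have hle : (Mdeg w e : Submodule K _) ≤ restrictTotalDegree (Fin n) K e.toNat := by
    intro p hp
    rw [mem_restrictTotalDegree]
    apply Finset.sup_le
    intro m hm
    have h1 := degsum_le_wt hw m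
    have h2 := hp m hm
    omega
  exact Submodule.finiteDimensional_of_le hle

end TriAux

namespace TriAux

variable {K : Type*} [Field K] {n : ℕ}

lemma supported_mem_Mdeg (d : ℕ) (i : Fin n) {p : MvPolynomial (Fin n) K}
    (hp : p ∈ supported K {j : Fin n | (j : ℕ) < (i : ℕ)}) (hd : p.totalDegree ≤ d) :
    p ∈ (Mdeg (fun j => ((d : ℤ) + 1) ^ ((j : ℕ) + 1)) ((d : ℤ) * ((d : ℤ) + 1) ^ (i : ℕ)) :
      Submodule K _) := by
  intro m hm
  have hd1 : (0 : ℤ) ≤ (d : ℤ) := Int.natCast_nonneg d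
  have hvars : ∀ j : Fin n, m j ≠ 0 → (j : ℕ) < (i : ℕ) := by
    intro j hj
    have hjv : j ∈ p.vars := (mem_vars j).2 ⟨m, hm, Finsupp.mem_support_iff.2 hj⟩
    exact (MvPolynomial.mem_supported.1 hp) hjv
  have hdeg : ((m.sum fun _ k => k : ℕ) : ℤ) ≤ (d : ℤ) := by
    exact_mod_cast le_trans (MvPolynomial.le_totalDegree hm) hd
  have hsum : ((m.sum fun _ k => k : ℕ) : ℤ) = ∑ j, (m j : ℤ) := by
    rw [Finsupp.sum_fintype m _ (fun _ => rfl)]; push_cast; rfl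
  calc wt (fun j => ((d : ℤ) + 1) ^ ((j : ℕ) + 1)) m
      = ∑ j, (m j : ℤ) * ((d : ℤ) + 1) ^ ((j : ℕ) + 1) := rfl
    _ ≤ ∑ j, (m j : ℤ) * ((d : ℤ) + 1) ^ (i : ℕ) := by
        refine Finset.sum_le_sum fun j _ => ?_
        rcases Nat.eq_zero_or_pos (m j) with h0 | h0
        · simp [h0]
        · refine mul_le_mul_of_nonneg_left ?_ (by positivity)
          exact pow_le_pow_right₀ (by omega) (hvars j (by omega))
    _ = (∑ j, (m j : ℤ)) * ((d : ℤ) + 1) ^ (i : ℕ) := (Finset.sum_mul ..).symm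
    _ ≤ (d : ℤ) * ((d : ℤ) + 1) ^ (i : ℕ) := by
        refine mul_le_mul_of_nonneg_right ?_ (by positivity)
        omega

end TriAux

set_option maxHeartbeats 1000000
set_option synthInstance.maxHeartbeats 1000000

namespace TriAux

variable {K : Type*} [Field K] {n : ℕ}

lemma drop_deg {w c : Fin n → ℤ} (hcw : ∀ j, c j + 1 ≤ w j) (k : ℕ)
    (a : Derivation K (MvPolynomial (Fin n) K) (MvPolynomial (Fin n) K))
    (ha : ∀ j, a (X j) ∈ (Mdeg w (c j - k) : Submodule K _))
    {e : ℤ} {p : MvPolynomial (Fin n) K} (hp : p ∈ (Mdeg w e : Submodule K _)) :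
    a p ∈ (Mdeg w (e - (k + 1)) : Submodule K _) := by
  have h := deriv_mem_Mdeg (t := -((k : ℤ) + 1)) a
    (fun j => Mdeg_mono (by have := hcw j; omega) (ha j)) hp
  have heq : e + -((k : ℤ) + 1) = e - (k + 1) := by ring
  rwa [heq] at h

variable (w c : Fin n → ℤ)

/-- The subalgebra of triangular derivations with weighted-degree bounds `c`. -/
def Vsub (hcw : ∀ j, c j + 1 ≤ w j) : LieSubalgebra K ↥(triangular K n) where
  carrier := {D | ∀ i : Fin n, (D : Derivation K (MvPolynomial (Fin n) K) (MvPolynomial (Fin n) K))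
    (X i) ∈ (Mdeg w (c i) : Submodule K _)}
  add_mem' := by
    intro a b ha hb i
    exact add_mem (ha i) (hb i)
  zero_mem' := by
    intro i
    exact zero_mem _
  smul_mem' := by
    intro t a ha i
    exact Submodule.smul_mem _ _ (ha i)
  lie_mem' := by
    intro a b ha hb i
    have ha' : ∀ j, (a : Derivation K (MvPolynomial (Fin n) K) (MvPolynomial (Fin n) K)) (X j) ∈ (Mdeg w (c j - (0 : ℕ)) : Submodule K _) :=
      fun j => by simpa using ha j
    have hb' : ∀ j, (b : Derivation K (MvPolynomial (Fin n) K) (MvPolynomial (Fin n) K)) (X j) ∈ (Mdeg w (c j - (0 : ℕ)) : Submodule K _) :=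
      fun j => by simpa using hb j
    exact sub_mem (Mdeg_mono (by omega) (drop_deg hcw 0 _ ha' (hb i)))
      (Mdeg_mono (by omega) (drop_deg hcw 0 _ hb' (ha i)))

lemma mem_Vsub {hcw : ∀ j, c j + 1 ≤ w j} {D : ↥(triangular K n)} :
    D ∈ Vsub w c hcw ↔ ∀ i : Fin n,
      (D : Derivation K (MvPolynomial (Fin n) K) (MvPolynomial (Fin n) K)) (X i)
        ∈ (Mdeg w (c i) : Submodule K _) := Iff.rfl

variable (S : Set ↥(triangular K n))


lemma step_deg (hcw : ∀ j, c j + 1 ≤ w j) (hV : (LieSubalgebra.lieSpan K ↥(triangular K n) S) ≤ Vsub w c hcw) (k : ℕ)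
    (y x : ↥(LieSubalgebra.lieSpan K ↥(triangular K n) S))
    (hx : ∀ i : Fin n, ((x : ↥(triangular K n)) : Derivation K (MvPolynomial (Fin n) K) (MvPolynomial (Fin n) K)) (X i)
      ∈ (Mdeg w (c i - k) : Submodule K _)) (i : Fin n) :
    ((⁅y, x⁆ : ↥(LieSubalgebra.lieSpan K ↥(triangular K n) S)) : ↥(triangular K n)).val (X i)
      ∈ (Mdeg w (c i - (k + 1)) : Submodule K _) := by
  have h : ((⁅y, x⁆ : ↥(LieSubalgebra.lieSpan K ↥(triangular K n) S)) : ↥(triangular K n)).val (X i)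
      = ((y : ↥(triangular K n)) : Derivation K (MvPolynomial (Fin n) K) (MvPolynomial (Fin n) K))
          (((x : ↥(triangular K n)) : Derivation K (MvPolynomial (Fin n) K) (MvPolynomial (Fin n) K)) (X i))
        - ((x : ↥(triangular K n)) : Derivation K (MvPolynomial (Fin n) K) (MvPolynomial (Fin n) K))
          (((y : ↥(triangular K n)) : Derivation K (MvPolynomial (Fin n) K) (MvPolynomial (Fin n) K)) (X i)) := rfl
  rw [h]
  have hy : ∀ j, ((y : ↥(triangular K n)) : Derivation K (MvPolynomial (Fin n) K) (MvPolynomial (Fin n) K)) (X j)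
      ∈ (Mdeg w (c j - (0 : ℕ)) : Submodule K _) := fun j => by simpa using hV y.2 j
  have h1 := drop_deg hcw 0 _ hy (hx i)
  have h2 := drop_deg hcw k _ hx (hV y.2 i)
  exact sub_mem (Mdeg_mono (by push_cast; omega) h1) (Mdeg_mono (by push_cast; omega) h2)

/-- Lie submodules witnessing the vanishing of the lower central series. -/
def Usub (hcw : ∀ j, c j + 1 ≤ w j) (hV : (LieSubalgebra.lieSpan K ↥(triangular K n) S) ≤ Vsub w c hcw) (k : ℕ) :
    LieSubmodule K ↥(LieSubalgebra.lieSpan K ↥(triangular K n) S) ↥(LieSubalgebra.lieSpan K ↥(triangular K n) S) where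
  carrier := {x : ↥(LieSubalgebra.lieSpan K ↥(triangular K n) S) | ∀ i : Fin n, ((x : ↥(triangular K n)) : Derivation K (MvPolynomial (Fin n) K) (MvPolynomial (Fin n) K)) (X i)
    ∈ (Mdeg w (c i - k) : Submodule K _)}
  add_mem' := by
    intro a b ha hb i
    exact add_mem (ha i) (hb i)
  zero_mem' := by
    intro i
    exact zero_mem _
  smul_mem' := by
    intro t a ha i
    exact Submodule.smul_mem _ _ (ha i)
  lie_mem := by
    intro y x hx i
    exact Mdeg_mono (by push_cast; omega) (step_deg w c S hcw hV k y x hx i)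

lemma mem_Usub {hcw : ∀ j, c j + 1 ≤ w j} {hV : (LieSubalgebra.lieSpan K ↥(triangular K n) S) ≤ Vsub w c hcw} {k : ℕ} {x : ↥(LieSubalgebra.lieSpan K ↥(triangular K n) S)} :
    x ∈ Usub w c S hcw hV k ↔ ∀ i : Fin n,
      ((x : ↥(triangular K n)) : Derivation K (MvPolynomial (Fin n) K) (MvPolynomial (Fin n) K)) (X i)
        ∈ (Mdeg w (c i - k) : Submodule K _) := Iff.rfl

lemma lcs_le_Usub (hcw : ∀ j, c j + 1 ≤ w j) (hV : (LieSubalgebra.lieSpan K ↥(triangular K n) S) ≤ Vsub w c hcw) (k : ℕ) :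
    LieModule.lowerCentralSeries K ↥(LieSubalgebra.lieSpan K ↥(triangular K n) S) ↥(LieSubalgebra.lieSpan K ↥(triangular K n) S) k ≤ Usub w c S hcw hV k := by
  induction k with
  | zero =>
    intro x _ i
    simpa using hV x.2 i
  | succ k ih =>
    rw [LieModule.lowerCentralSeries_succ]
    refine le_trans (LieSubmodule.mono_lie_right _ ih) ?_
    rw [LieSubmodule.lie_le_iff]
    intro y _ x hx i
    exact step_deg w c S hcw hV k y x hx i

end TriAux

set_option maxHeartbeats 1000000
set_option synthInstance.maxHeartbeats 1000000

open TriAux in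
/-- For `n ≥ 2`, the Lie algebra `u_n` is locally finite dimensional and
locally nilpotent: the Lie subalgebra generated by any finite subset of `u_n` is finite
dimensional and nilpotent. -/
theorem triangular_locally_finite_and_locally_nilpotent
    (K : Type*) [Field K] [CharZero K] (n : ℕ) (hn : 2 ≤ n)
    (S : Set ↥(triangular K n)) (hS : S.Finite) :
    FiniteDimensional K ↥(LieSubalgebra.lieSpan K ↥(triangular K n) S) ∧
      LieModule.IsNilpotent ↥(LieSubalgebra.lieSpan K ↥(triangular K n) S)
        ↥(LieSubalgebra.lieSpan K ↥(triangular K n) S) := by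
  classical
  set d : ℕ := hS.toFinset.sup
    (fun D => Finset.univ.sup fun i : Fin n =>
      (((D : ↥(triangular K n)) : Derivation K (MvPolynomial (Fin n) K)
        (MvPolynomial (Fin n) K)) (X i)).totalDegree) with hd_def
  have hd : ∀ D ∈ S, ∀ i : Fin n,
      (((D : ↥(triangular K n)) : Derivation K (MvPolynomial (Fin n) K)
        (MvPolynomial (Fin n) K)) (X i)).totalDegree ≤ d := by
    intro D hD i
    refine le_trans (Finset.le_sup (f := fun i : Fin n =>
      (((D : ↥(triangular K n)) : Derivation K (MvPolynomial (Fin n) K)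
        (MvPolynomial (Fin n) K)) (X i)).totalDegree) (Finset.mem_univ i)) ?_
    exact Finset.le_sup (f := fun D : ↥(triangular K n) => Finset.univ.sup fun i : Fin n =>
      (((D : ↥(triangular K n)) : Derivation K (MvPolynomial (Fin n) K)
        (MvPolynomial (Fin n) K)) (X i)).totalDegree) (hS.mem_toFinset.2 hD)
  set w : Fin n → ℤ := fun j => ((d : ℤ) + 1) ^ ((j : ℕ) + 1) with hw_def
  set c : Fin n → ℤ := fun i => (d : ℤ) * ((d : ℤ) + 1) ^ (i : ℕ) with hc_def
  have hd0 : (0 : ℤ) ≤ (d : ℤ) := Int.natCast_nonneg d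
  have hpow1 : ∀ k : ℕ, (1 : ℤ) ≤ ((d : ℤ) + 1) ^ k := fun k => one_le_pow₀ (by omega)
  have hw : ∀ j, 1 ≤ w j := fun j => hpow1 _
  have hcw : ∀ i, c i + 1 ≤ w i := by
    intro i
    have h1 := hpow1 (i : ℕ)
    have h2 : w i = (d : ℤ) * ((d : ℤ) + 1) ^ (i : ℕ) + ((d : ℤ) + 1) ^ (i : ℕ) := by
      show ((d : ℤ) + 1) ^ ((i : ℕ) + 1) = _
      ring
    have h3 : c i = (d : ℤ) * ((d : ℤ) + 1) ^ (i : ℕ) := rfl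
    linarith
  have hSV : S ⊆ ↑(Vsub (K := K) w c hcw) := by
    intro D hD
    rw [SetLike.mem_coe, mem_Vsub]
    intro i
    exact supported_mem_Mdeg d i (D.2 i) (hd D hD i)
  have hV : LieSubalgebra.lieSpan K ↥(triangular K n) S ≤ Vsub (K := K) w c hcw :=
    (LieSubalgebra.lieSpan_le).2 hSV
  -- finite dimensionality
  haveI hMfd : ∀ i : Fin n,
      FiniteDimensional K ↥(Mdeg w (c i) : Submodule K (MvPolynomial (Fin n) K)) :=
    fun i => Mdeg_fd hw (c i)
  let φ : ↥(Vsub (K := K) w c hcw) →ₗ[K]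
      (∀ i : Fin n, ↥(Mdeg w (c i) : Submodule K (MvPolynomial (Fin n) K))) :=
    { toFun := fun D i => ⟨((D : ↥(triangular K n)) : Derivation K (MvPolynomial (Fin n) K)
        (MvPolynomial (Fin n) K)) (X i), (mem_Vsub (K := K) w c).1 D.2 i⟩
      map_add' := fun a b => by funext i; exact Subtype.ext rfl
      map_smul' := fun t a => by funext i; exact Subtype.ext rfl }
  have hφ : Function.Injective φ := by
    intro a b h
    refine Subtype.ext (Subtype.ext (derivation_ext fun i => ?_))
    exact congrArg Subtype.val (congrFun h i)
  haveI hVfd : FiniteDimensional K ↥(Vsub (K := K) w c hcw) := FiniteDimensional.of_injective φ hφ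
  haveI hLfd : FiniteDimensional K ↥(LieSubalgebra.lieSpan K ↥(triangular K n) S) :=
    FiniteDimensional.of_injective (LieSubalgebra.inclusion hV).toLinearMap
      (LieSubalgebra.inclusion_injective hV)
  refine ⟨hLfd, ?_⟩
  -- nilpotency
  set N : ℕ := d * (d + 1) ^ n + 1 with hN_def
  have hUN : Usub (K := K) w c S hcw hV N = ⊥ := by
    rw [eq_bot_iff]
    intro x hx
    rw [mem_Usub] at hx
    have hx0 : ((x : ↥(triangular K n)) : Derivation K (MvPolynomial (Fin n) K)
        (MvPolynomial (Fin n) K)) = 0 := by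
      refine derivation_ext fun i => ?_
      have hbound : c i - (N : ℤ) < 0 := by
        have hpow : ((d : ℤ) + 1) ^ (i : ℕ) ≤ ((d : ℤ) + 1) ^ n :=
          pow_le_pow_right₀ (by omega) (le_of_lt i.2)
        have hcN : ((N : ℕ) : ℤ) = (d : ℤ) * ((d : ℤ) + 1) ^ n + 1 := by
          rw [hN_def]; push_cast; ring
        have hci : c i ≤ (d : ℤ) * ((d : ℤ) + 1) ^ n :=
          mul_le_mul_of_nonneg_left hpow hd0
        omega
      have h0 := eq_zero_of_mem_Mdeg hw hbound (hx i)
      simpa using h0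
    exact (LieSubmodule.mem_bot _).2 (Subtype.ext (Subtype.ext hx0))
  exact (LieModule.isNilpotent_iff K _ _).2 ⟨N, le_bot_iff.1 (hUN ▸ lcs_le_Usub (K := K) w c S hcw hV N)⟩
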